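/- Let G be a (P2 ∪ P3)-free graph and S a cutset of G. If G - S has at least two components each having at least two vertices, then every component of G - S is a clique. -/

import Mathlib

set_option maxHeartbeats 1000000

open SimpleGraph

variable {V : Type*}

/-- The disjoint union `P2 ∪ P3`: edge 0-1, path 2-3-4, on `Fin 5`. -/
def P2P3 : SimpleGraph (Fin 5) := SimpleGraph.fromRel (fun a b =>
  (a = 0 ∧ b = 1) ∨ (a = 2 ∧ b = 3) ∨ (a = 3 ∧ b = 4))

/-- `G` has no induced subgraph isomorphic to `P2 ∪ P3`. -/
def P2P3Free (G : SimpleGraph V) : Prop :=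
  ¬ ∃ f : Fin 5 ↪ V, ∀ a b, P2P3.Adj a b ↔ G.Adj (f a) (f b)

/-- The number of connected components of `G - S`. -/
noncomputable def numComponents [Fintype V] (G : SimpleGraph V) (S : Finset V) : ℕ :=
  Nat.card ((G.induce ((↑S : Set V)ᶜ)).ConnectedComponent)

/-- `G` is `t`-tough: `|S| ≥ t·c(G-S)` whenever `c(G-S) ≥ 2`. -/
def IsTough [Fintype V] (t : ℝ) (G : SimpleGraph V) : Prop :=
  ∀ S : Finset V, 2 ≤ numComponents G S → t * numComponents G S ≤ S.card

lemma exists_P3' {W : Type*} (H : SimpleGraph W) :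
    ∀ n, ∀ x y : W, ∀ p : H.Walk x y, p.length = n → x ≠ y → ¬ H.Adj x y →
      ∃ a b c, H.Reachable x a ∧ H.Adj a b ∧ H.Adj b c ∧ ¬ H.Adj a c ∧ a ≠ c := by
  intro n
  induction n using Nat.strong_induction_on with
  | _ n ih =>
    intro x y p hl hxy hna
    cases p with
    | nil => exact absurd rfl hxy
    | @cons _ u _ h q =>
      cases q with
      | nil => exact absurd h hna
      | @cons _ v _ h' q' =>
        by_cases hxv : x = v
        · subst hxv
          exact ih q'.length (by simp only [Walk.length_cons] at hl; omega) x y q' rfl hxy hna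
        · by_cases hadj : H.Adj x v
          · by_cases hvy : v = y
            · subst hvy; exact absurd hadj hna
            · exact ih (q'.length + 1) (by simp only [Walk.length_cons] at hl; omega) x y
                (SimpleGraph.Walk.cons hadj q') (by simp) hxy hna
          · exact ⟨x, u, v, Reachable.refl x, h, h', hadj, hxv⟩

theorem stmt3 [Fintype V] (G : SimpleGraph V) (hfree : P2P3Free G) (S : Finset V)
    (hcut : 2 ≤ numComponents G S)
    (hnt : ∃ D1 D2 : (G.induce ((↑S : Set V)ᶜ)).ConnectedComponent, D1 ≠ D2 ∧
      2 ≤ (Subtype.val '' D1.supp).ncard ∧ 2 ≤ (Subtype.val '' D2.supp).ncard) :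
    ∀ D : (G.induce ((↑S : Set V)ᶜ)).ConnectedComponent,
      G.IsClique (Subtype.val '' D.supp) := by
  set H := G.induce ((↑S : Set V)ᶜ) with hH
  -- key facts
  have hadj_iff : ∀ a b : ((↑S : Set V)ᶜ : Set V), H.Adj a b ↔ G.Adj ↑a ↑b := by
    intro a b; simp [hH]
  have hcross : ∀ a b : ((↑S : Set V)ᶜ : Set V),
      H.connectedComponentMk a ≠ H.connectedComponentMk b → ¬ G.Adj ↑a ↑b := by
    intro a b hne hadj
    exact hne (ConnectedComponent.sound ((hadj_iff a b).mpr hadj).reachable)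
  intro D
  by_contra hnc
  rw [SimpleGraph.isClique_iff, Set.Pairwise] at hnc
  push_neg at hnc
  obtain ⟨x, hx, y, hy, hxy, hnadj⟩ := hnc
  obtain ⟨x', hx', rfl⟩ := hx
  obtain ⟨y', hy', rfl⟩ := hy
  have hx'y' : x' ≠ y' := fun h => hxy (congrArg _ h)
  have hnH : ¬ H.Adj x' y' := fun h => hnadj ((hadj_iff x' y').mp h)
  have hreach : H.Reachable x' y' := by
    rw [ConnectedComponent.mem_supp_iff] at hx' hy'
    exact ConnectedComponent.exact (hx'.trans hy'.symm)
  obtain ⟨a, b, c, hra, hab, hbc, hnac, hac⟩ :=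
    exists_P3' H hreach.some.length x' y' hreach.some rfl hx'y' hnH
  -- a, b, c are in component D
  rw [ConnectedComponent.mem_supp_iff] at hx'
  have hDa : H.connectedComponentMk a = D := (ConnectedComponent.sound hra).symm.trans hx'
  have hDb : H.connectedComponentMk b = D := (ConnectedComponent.sound hab.reachable).symm.trans hDa
  have hDc : H.connectedComponentMk c = D := (ConnectedComponent.sound hbc.reachable).symm.trans hDb
  -- find another component with ≥ 2 vertices
  obtain ⟨D1, D2, hD12, h1, h2⟩ := hnt
  obtain ⟨D', hD'ne, hD'2⟩ : ∃ D', D' ≠ D ∧ 2 ≤ (Subtype.val '' D'.supp).ncard := by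
    by_cases h : D1 = D
    · exact ⟨D2, fun he => hD12 (h.trans he.symm), h2⟩
    · exact ⟨D1, h, h1⟩
  have hfin : (Subtype.val '' D'.supp).Finite := by
    classical
    exact (Set.toFinite _)
  obtain ⟨u0, v0, hu0, hv0, huv0⟩ := (Set.one_lt_ncard_iff hfin).mp hD'2
  obtain ⟨u, hu, rfl⟩ := hu0
  obtain ⟨v, hv, rfl⟩ := hv0
  have huv : u ≠ v := fun h => huv0 (congrArg _ h)
  rw [ConnectedComponent.mem_supp_iff] at hu hv
  have hruv : H.Reachable u v := ConnectedComponent.exact (hu.trans hv.symm)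
  obtain ⟨w, huw⟩ : ∃ w, H.Adj u w := by
    obtain ⟨p⟩ := hruv
    cases p with
    | nil => exact absurd rfl huv
    | cons h q => exact ⟨_, h⟩
  have hDw : H.connectedComponentMk w = D' := (ConnectedComponent.sound huw.reachable).symm.trans hu
  -- distinctness across components
  have hcrossD : ∀ p q : ((↑S : Set V)ᶜ : Set V), H.connectedComponentMk p = D' →
      H.connectedComponentMk q = D → (↑p : V) ≠ ↑q ∧ ¬ G.Adj ↑p ↑q := by
    intro p q hp hq
    have hne : H.connectedComponentMk p ≠ H.connectedComponentMk q := by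
      rw [hp, hq]; exact hD'ne
    exact ⟨fun he => hne (by rw [Subtype.coe_injective he]), hcross p q hne⟩
  obtain ⟨hua, hua'⟩ := hcrossD u a hu hDa
  obtain ⟨hub, hub'⟩ := hcrossD u b hu hDb
  obtain ⟨huc, huc'⟩ := hcrossD u c hu hDc
  obtain ⟨hwa, hwa'⟩ := hcrossD w a hDw hDa
  obtain ⟨hwb, hwb'⟩ := hcrossD w b hDw hDb
  obtain ⟨hwc, hwc'⟩ := hcrossD w c hDw hDc
  -- adjacency facts in G
  have gab : G.Adj ↑a ↑b := (hadj_iff a b).mp hab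
  have gbc : G.Adj ↑b ↑c := (hadj_iff b c).mp hbc
  have guw : G.Adj ↑u ↑w := (hadj_iff u w).mp huw
  have gnac : ¬ G.Adj ↑a ↑c := fun h => hnac ((hadj_iff a c).mpr h)
  have hacv : (↑a : V) ≠ ↑c := fun h => hac (Subtype.coe_injective h)
  -- build the embedding
  have habv : (↑a : V) ≠ ↑b := gab.ne
  have hbcv : (↑b : V) ≠ ↑c := gbc.ne
  have huwv : (↑u : V) ≠ ↑w := guw.ne
  set g : Fin 5 → V := ![↑u, ↑w, ↑a, ↑b, ↑c] with hg
  have huwv' := huwv.symm; have hua3 := hua.symm; have hub2 := hub.symm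
  have huc2 := huc.symm; have hwa2 := hwa.symm; have hwb2 := hwb.symm
  have hwc2 := hwc.symm; have habv' := habv.symm; have hbcv' := hbcv.symm
  have hacv' := hacv.symm
  have ginj : Function.Injective g := by
    intro i j hij
    fin_cases i <;> fin_cases j <;> first
      | rfl
      | (simp only [hg, Matrix.cons_val_zero, Matrix.cons_val_one, Matrix.head_cons,
          Matrix.cons_val_two, Matrix.tail_cons, Matrix.cons_val_three,
          Matrix.cons_val_four] at hij
         exact absurd hij (by assumption))
  letI : DecidableRel P2P3.Adj := fun a b =>
    decidable_of_iff _ (SimpleGraph.fromRel_adj _ a b).symm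
  apply hfree
  refine ⟨⟨g, ginj⟩, ?_⟩
  have hgsymm : ∀ p q : V, ¬ G.Adj p q → ¬ G.Adj q p := fun p q h h' => h h'.symm
  intro i j
  fin_cases i <;> fin_cases j <;>
    simp only [hg, Matrix.cons_val_zero, Matrix.cons_val_one, Matrix.head_cons,
      Matrix.cons_val_two, Matrix.tail_cons, Matrix.cons_val_three,
      Matrix.cons_val_four] <;>
    first
      | exact iff_of_false (by decide) G.irrefl
      | exact iff_of_true (by decide) guw
      | exact iff_of_true (by decide) guw.symm
      | exact iff_of_true (by decide) gab
      | exact iff_of_true (by decide) gab.symm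
      | exact iff_of_true (by decide) gbc
      | exact iff_of_true (by decide) gbc.symm
      | exact iff_of_false (by decide) gnac
      | exact iff_of_false (by decide) (hgsymm _ _ gnac)
      | exact iff_of_false (by decide) hua'
      | exact iff_of_false (by decide) (hgsymm _ _ hua')
      | exact iff_of_false (by decide) hub'
      | exact iff_of_false (by decide) (hgsymm _ _ hub')
      | exact iff_of_false (by decide) huc'
      | exact iff_of_false (by decide) (hgsymm _ _ huc')
      | exact iff_of_false (by decide) hwa'
      | exact iff_of_false (by decide) (hgsymm _ _ hwa')
      | exact iff_of_false (by decide) hwb'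
      | exact iff_of_false (by decide) (hgsymm _ _ hwb')
      | exact iff_of_false (by decide) hwc'
      | exact iff_of_false (by decide) (hgsymm _ _ hwc')
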